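/- If n = 2 or k = 2, then every extreme point of the truthful polytope T(σ) induced by any family of value functions v is integral, i.e., all its coordinates lie in {0,1}. -/

import Mathlib

namespace Stmt7

variable {n k : ℕ}

/-- Membership in the truthful polytope `T(σ)` for the orderings induced by `v`. -/
def InT (v x : Fin n → (Fin n → Fin k) → ℝ) : Prop :=
  (∀ i s, 0 ≤ x i s ∧ x i s ≤ 1) ∧ (∀ s, ∑ i, x i s = 1) ∧
  (∀ (i : Fin n) (s : Fin n → Fin k) (a b : Fin k),
    v i (Function.update s i a) < v i (Function.update s i b) →
    x i (Function.update s i a) ≤ x i (Function.update s i b))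

open Function Finset


lemma not_extreme (v y d : Fin n → (Fin n → Fin k) → ℝ)
    (hy : InT v y)
    (i0 : Fin n) (s0 : Fin n → Fin k) (hd0 : d i0 s0 ≠ 0)
    (h1 : ∀ i s, d i s ≠ 0 → 0 < y i s ∧ y i s < 1)
    (h2 : ∀ s, ∑ i, d i s = 0)
    (h3 : ∀ (i : Fin n) (s : Fin n → Fin k) (a b : Fin k),
      v i (Function.update s i a) < v i (Function.update s i b) →
      y i (Function.update s i a) = y i (Function.update s i b) →
      d i (Function.update s i a) = d i (Function.update s i b)) :
    y ∉ Set.extremePoints ℝ {x | InT v x} := by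
  classical
  intro hext
  haveI : Nonempty (Fin n) := ⟨i0⟩
  haveI : Nonempty (Fin n → Fin k) := ⟨s0⟩
  haveI : Nonempty (Fin k) := ⟨s0 i0⟩
  set fA : Fin n × (Fin n → Fin k) → ℝ := fun p =>
    if d p.1 p.2 = 0 then 1 else min (y p.1 p.2) (1 - y p.1 p.2) / |d p.1 p.2| with hfA
  set fB : (Fin n × (Fin n → Fin k)) × Fin k × Fin k → ℝ := fun q =>
    if v q.1.1 (Function.update q.1.2 q.1.1 q.2.1) < v q.1.1 (Function.update q.1.2 q.1.1 q.2.2)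
        ∧ d q.1.1 (Function.update q.1.2 q.1.1 q.2.1) ≠ d q.1.1 (Function.update q.1.2 q.1.1 q.2.2)
    then (y q.1.1 (Function.update q.1.2 q.1.1 q.2.2) - y q.1.1 (Function.update q.1.2 q.1.1 q.2.1))
      / |d q.1.1 (Function.update q.1.2 q.1.1 q.2.2) - d q.1.1 (Function.update q.1.2 q.1.1 q.2.1)|
    else 1 with hfB
  set A : ℝ := Finset.univ.inf' Finset.univ_nonempty fA with hA
  set B : ℝ := Finset.univ.inf' Finset.univ_nonempty fB with hB
  have hApos : 0 < A := by
    rw [hA, Finset.lt_inf'_iff]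
    intro p _
    rw [hfA]
    by_cases hd : d p.1 p.2 = 0
    · simp [hd]
    · simp only [hd, if_false]
      apply div_pos
      · rcases h1 p.1 p.2 hd with ⟨h1a, h1b⟩
        simp [lt_min_iff]; constructor <;> linarith
      · exact abs_pos.mpr hd
  have hBpos : 0 < B := by
    rw [hB, Finset.lt_inf'_iff]
    intro q _
    rw [hfB]
    dsimp only
    by_cases hq : v q.1.1 (Function.update q.1.2 q.1.1 q.2.1) < v q.1.1 (Function.update q.1.2 q.1.1 q.2.2)
        ∧ d q.1.1 (Function.update q.1.2 q.1.1 q.2.1) ≠ d q.1.1 (Function.update q.1.2 q.1.1 q.2.2)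
    · rw [if_pos hq]
      apply div_pos
      · have hle := hy.2.2 q.1.1 q.1.2 q.2.1 q.2.2 hq.1
        have hne : y q.1.1 (Function.update q.1.2 q.1.1 q.2.1) ≠ y q.1.1 (Function.update q.1.2 q.1.1 q.2.2) := by
          intro he; exact hq.2 (h3 _ _ _ _ hq.1 he)
        cases lt_or_eq_of_le hle with
        | inl h => linarith
        | inr h => exact absurd h hne
      · rw [abs_pos, sub_ne_zero]; exact fun he => hq.2 he.symm
    · simp [hq]
  set ε : ℝ := min A B with hε
  have hεpos : 0 < ε := lt_min hApos hBpos
  -- key bounds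
  have keyA : ∀ i s, d i s ≠ 0 → ε * |d i s| ≤ min (y i s) (1 - y i s) := by
    intro i s hd
    have h := Finset.inf'_le fA (Finset.mem_univ (i, s))
    rw [hfA] at h
    simp only [hd, if_false] at h
    have hεA : ε ≤ min (y i s) (1 - y i s) / |d i s| := le_trans (min_le_left A B) h
    rw [le_div_iff₀ (abs_pos.mpr hd)] at hεA
    linarith
  have keyB : ∀ (i : Fin n) (s : Fin n → Fin k) (a b : Fin k),
      v i (Function.update s i a) < v i (Function.update s i b) →
      d i (Function.update s i a) ≠ d i (Function.update s i b) →
      ε * |d i (Function.update s i b) - d i (Function.update s i a)|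
        ≤ y i (Function.update s i b) - y i (Function.update s i a) := by
    intro i s a b hv hd
    have h := Finset.inf'_le fB (Finset.mem_univ ((i, s), (a, b)))
    rw [hfB] at h
    dsimp only at h
    rw [if_pos (⟨hv, hd⟩ : _ ∧ _)] at h
    have hεB := le_trans (min_le_right A B) h
    rw [le_div_iff₀ (by rw [abs_pos, sub_ne_zero]; exact fun he => hd he.symm)] at hεB
    linarith
  -- membership
  have hmem : ∀ η : ℝ, |η| ≤ ε → InT v (y + η • d) := by
    intro η hη
    have hηa : 0 ≤ |η| := abs_nonneg η
    refine ⟨?_, ?_, ?_⟩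
    · intro i s
      simp only [Pi.add_apply, Pi.smul_apply, smul_eq_mul]
      by_cases hd : d i s = 0
      · simp [hd]; exact hy.1 i s
      · have hk := keyA i s hd
        have habs : |η * d i s| ≤ ε * |d i s| := by
          rw [abs_mul]
          exact mul_le_mul_of_nonneg_right hη (abs_nonneg _)
        have h1' := abs_le.mp (le_trans (le_refl _) habs)
        have hmin1 : min (y i s) (1 - y i s) ≤ y i s := min_le_left _ _
        have hmin2 : min (y i s) (1 - y i s) ≤ 1 - y i s := min_le_right _ _
        have := abs_le.mp habs
        have h2' : -(min (y i s) (1 - y i s)) ≤ η * d i s ∧ η * d i s ≤ min (y i s) (1 - y i s) := by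
          constructor
          · have := neg_abs_le (η * d i s); linarith [habs, hk]
          · have := le_abs_self (η * d i s); linarith [habs, hk]
        constructor <;> linarith [h2'.1, h2'.2]
    · intro s
      simp only [Pi.add_apply, Pi.smul_apply, smul_eq_mul]
      rw [Finset.sum_add_distrib, ← Finset.mul_sum, h2 s, hy.2.1 s]
      ring
    · intro i s a b hv
      simp only [Pi.add_apply, Pi.smul_apply, smul_eq_mul]
      by_cases hd : d i (Function.update s i a) = d i (Function.update s i b)
      · have := hy.2.2 i s a b hv
        rw [hd]; linarith
      · have hk := keyB i s a b hv hd
        have habs : |η * (d i (Function.update s i a) - d i (Function.update s i b))|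
            ≤ ε * |d i (Function.update s i b) - d i (Function.update s i a)| := by
          rw [abs_mul, abs_sub_comm]
          exact mul_le_mul_of_nonneg_right hη (abs_nonneg _)
        have := le_abs_self (η * (d i (Function.update s i a) - d i (Function.update s i b)))
        nlinarith [hk, habs, this]
  have hx1 : (y - ε • d) ∈ {x | InT v x} := by
    have := hmem (-ε) (by rw [abs_neg, abs_of_pos hεpos])
    have he : y + (-ε) • d = y - ε • d := by
      funext i s; simp [sub_eq_add_neg]
    rwa [he] at this
  have hx2 : (y + ε • d) ∈ {x | InT v x} := hmem ε (by rw [abs_of_pos hεpos])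
  have hseg : y ∈ openSegment ℝ (y - ε • d) (y + ε • d) := by
    refine ⟨1/2, 1/2, by norm_num, by norm_num, by norm_num, ?_⟩
    funext i s
    simp only [Pi.add_apply, Pi.smul_apply, Pi.sub_apply, smul_eq_mul]
    ring
  have heq := hext.2 hx1 hx2 hseg
  have hzero : ε * d i0 s0 = 0 := by
    have h := congrFun (congrFun heq i0) s0
    simp only [Pi.add_apply, Pi.sub_apply, Pi.smul_apply, smul_eq_mul] at h
    linarith
  rcases mul_eq_zero.mp hzero with h | h
  · exact absurd h (ne_of_gt hεpos)
  · exact hd0 h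


lemma fin2 : ∀ j : Fin 2, j = 0 ∨ j = 1 := by decide

lemma n2_case (v y : Fin 2 → (Fin 2 → Fin k) → ℝ) (hyT : InT v y)
    (i : Fin 2) (s : Fin 2 → Fin k) (h0 : y i s ≠ 0) (h1 : y i s ≠ 1) :
    y ∉ Set.extremePoints ℝ {x | InT v x} := by
  classical
  have hsum : ∀ u, y 0 u + y 1 u = 1 := fun u => by
    have := hyT.2.1 u; rwa [Fin.sum_univ_two] at this
  set t := y 0 s with ht
  have htf : 0 < t ∧ t < 1 := by
    have hb0 := hyT.1 0 s
    have hb1 := hyT.1 1 s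
    have hs := hsum s
    rcases fin2 i with rfl | rfl
    · refine ⟨lt_of_le_of_ne hb0.1 (Ne.symm h0), lt_of_le_of_ne hb0.2 h1⟩
    · have hx0 : y 1 s ≠ 0 := h0
      have hx1 : y 1 s ≠ 1 := h1
      constructor
      · rcases lt_or_eq_of_le hb1.2 with h | h
        · linarith
        · exact absurd h hx1
      · rcases lt_or_eq_of_le hb1.1 with h | h
        · linarith
        · exact absurd h.symm hx0
  set d : Fin 2 → (Fin 2 → Fin k) → ℝ :=
    fun j u => if y 0 u = t then (if j = 0 then (1:ℝ) else -1) else 0 with hd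
  apply not_extreme v y d hyT 0 s
  · simp [hd, ht]
  · intro j u hne
    have hc : y 0 u = t := by
      by_contra hc
      apply hne
      simp [hd, hc]
    have h1u : y 1 u = 1 - t := by have := hsum u; linarith [hc]
    rcases fin2 j with rfl | rfl
    · rw [hc]; exact htf
    · rw [h1u]; constructor <;> linarith [htf.1, htf.2]
  · intro u
    rw [Fin.sum_univ_two, hd]
    by_cases hc : y 0 u = t <;> simp [hc]
  · intro j u a b hv hyy
    have key : ∀ w w' : Fin 2 → Fin k, y 0 w = y 0 w' → d j w = d j w' := by
      intro w w' hww
      rw [hd]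
      simp only [hww]
    rcases fin2 j with rfl | rfl
    · exact key _ _ hyy
    · refine key _ _ ?_
      have h1 := hsum (Function.update u 1 a)
      have h2 := hsum (Function.update u 1 b)
      linarith [hyy]

section K2
open scoped Classical
variable {n : ℕ}

def flip2 (b : Fin 2) : Fin 2 := if b = 0 then 1 else 0

lemma flip2_flip2 : ∀ b, flip2 (flip2 b) = b := by decide
lemma flip2_ne : ∀ b, flip2 b ≠ b := by decide
lemma flip2_of_ne : ∀ a b : Fin 2, a ≠ b → flip2 a = b := by decide

def pt (c : Fin n × (Fin n → Fin 2)) : Fin n × (Fin n → Fin 2) :=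
  (c.1, Function.update c.2 c.1 (flip2 (c.2 c.1)))

lemma pt_fst (c : Fin n × (Fin n → Fin 2)) : (pt c).1 = c.1 := rfl

lemma pt_bit (c : Fin n × (Fin n → Fin 2)) : (pt c).2 c.1 = flip2 (c.2 c.1) :=
  Function.update_self _ _ _

lemma pt_pt (c : Fin n × (Fin n → Fin 2)) : pt (pt c) = c := by
  unfold pt
  refine Prod.ext rfl ?_
  funext j
  by_cases hj : j = c.1
  · subst hj
    simp [Function.update_self, flip2_flip2]
  · simp [Function.update_of_ne hj]

lemma pt_ne (c : Fin n × (Fin n → Fin 2)) : pt c ≠ c := by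
  intro h
  have := congrFun (congrArg Prod.snd h) c.1
  rw [pt_bit] at this
  exact flip2_ne _ this

lemma pt_bit' (c : Fin n × (Fin n → Fin 2)) : (pt c).2 (pt c).1 = flip2 (c.2 c.1) :=
  pt_bit c

lemma pt_snd_ne (c : Fin n × (Fin n → Fin 2)) : (pt c).2 ≠ c.2 := by
  intro h
  exact pt_ne c (Prod.ext rfl h)

noncomputable def par (s : Fin n → Fin 2) : ℝ := (-1) ^ (∑ j, (s j : ℕ))

lemma par_ne_zero (s : Fin n → Fin 2) : par s ≠ 0 := by
  unfold par
  apply pow_ne_zero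
  norm_num

lemma par_pt (c : Fin n × (Fin n → Fin 2)) : par (pt c).2 = - par c.2 := by
  unfold par pt
  have h1 : ∑ j, ((Function.update c.2 c.1 (flip2 (c.2 c.1))) j : ℕ)
      = (flip2 (c.2 c.1) : ℕ) + ∑ j ∈ univ \ {c.1}, (c.2 j : ℕ) := by
    rw [← Finset.sum_update_of_mem (Finset.mem_univ c.1)]
    apply Finset.sum_congr rfl
    intro j _
    by_cases hj : j = c.1
    · subst hj; simp [Function.update_self]
    · simp [Function.update_of_ne hj]
  have h2 : ∑ j, (c.2 j : ℕ) = (c.2 c.1 : ℕ) + ∑ j ∈ univ \ {c.1}, (c.2 j : ℕ) := by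
    rw [← Finset.erase_eq]
    exact (Finset.add_sum_erase _ _ (Finset.mem_univ c.1)).symm
  rw [h1, h2]
  rcases fin2 (c.2 c.1) with hb | hb <;> rw [hb] <;>
    · show ((-1:ℝ)) ^ _ = -(-1:ℝ) ^ _
      rw [pow_add, pow_add]
      norm_num [flip2]

def Frac (y : Fin n → (Fin n → Fin 2) → ℝ) (c : Fin n × (Fin n → Fin 2)) : Prop :=
  y c.1 c.2 ≠ 0 ∧ y c.1 c.2 ≠ 1

open scoped Classical in
noncomputable def rho (y : Fin n → (Fin n → Fin 2) → ℝ) (c : Fin n × (Fin n → Fin 2)) :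
    Fin n × (Fin n → Fin 2) :=
  if Frac y (pt c) ∧ c.2 c.1 = 1 then pt c else c

variable {y : Fin n → (Fin n → Fin 2) → ℝ}

lemma rho_eq_or (c : Fin n × (Fin n → Fin 2)) : rho y c = c ∨ rho y c = pt c := by
  unfold rho; split_ifs <;> simp

lemma rho_frac {c : Fin n × (Fin n → Fin 2)} (h : Frac y c) : Frac y (rho y c) := by
  unfold rho; split_ifs with h'
  · exact h'.1
  · exact h

lemma rho_rho {c : Fin n × (Fin n → Fin 2)} (h : Frac y c) : rho y (rho y c) = rho y c := by
  classical
  by_cases h1 : Frac y (pt c) ∧ c.2 c.1 = 1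
  · have e1 : rho y c = pt c := by unfold rho; rw [if_pos h1]
    rw [e1]
    unfold rho
    rw [if_neg]
    intro hcon
    have hb := hcon.2
    rw [pt_bit', h1.2] at hb
    exact absurd hb (by decide)
  · have e1 : rho y c = c := by unfold rho; rw [if_neg h1]
    rw [e1]
    unfold rho
    rw [if_neg h1]

lemma rho_pair {c : Fin n × (Fin n → Fin 2)} (hc : Frac y c) (hp : Frac y (pt c)) :
    rho y c = rho y (pt c) := by
  unfold rho
  rcases fin2 (c.2 c.1) with hb | hb
  · rw [if_neg, if_pos, pt_pt]
    · constructor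
      · rwa [pt_pt]
      · rw [pt_bit', hb]; decide
    · intro h
      rw [hb] at h
      exact absurd h.2 (by decide)
  · rw [if_pos ⟨hp, hb⟩, if_neg]
    intro h
    rw [pt_bit', hb] at h
    exact absurd h.2 (by decide)


open scoped Classical in
noncomputable def FCset (y : Fin n → (Fin n → Fin 2) → ℝ) : Finset (Fin n × (Fin n → Fin 2)) :=
  univ.filter (fun c => Frac y c)

open scoped Classical in
noncomputable def Fset (y : Fin n → (Fin n → Fin 2) → ℝ) : Finset (Fin n → Fin 2) :=
  univ.filter (fun s => ∃ i, Frac y (i, s))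

open scoped Classical in
noncomputable def Rset (y : Fin n → (Fin n → Fin 2) → ℝ) : Finset (Fin n × (Fin n → Fin 2)) :=
  univ.filter (fun c => Frac y c ∧ rho y c = c)

lemma rho_mem_R {c : Fin n × (Fin n → Fin 2)} (hc : Frac y c) : rho y c ∈ Rset y := by
  classical
  exact Finset.mem_filter.mpr ⟨Finset.mem_univ _, rho_frac hc, rho_rho hc⟩

noncomputable def Psi (y : Fin n → (Fin n → Fin 2) → ℝ) :
    ({c // c ∈ Rset y} → ℝ) →ₗ[ℝ] ({s // s ∈ Fset y} → ℝ) where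
  toFun := fun e sF => ∑ i, if h : Frac y (i, sF.1) then e ⟨rho y (i, sF.1), rho_mem_R h⟩ else 0
  map_add' := by
    intro e f
    funext sF
    dsimp only [Pi.add_apply]
    rw [← Finset.sum_add_distrib]
    refine Finset.sum_congr rfl fun i _ => ?_
    by_cases h : Frac y (i, sF.1) <;> simp [h]
  map_smul' := by
    intro a e
    funext sF
    dsimp only [Pi.smul_apply, smul_eq_mul, RingHom.id_apply]
    rw [Finset.mul_sum]
    refine Finset.sum_congr rfl fun i _ => ?_
    by_cases h : Frac y (i, sF.1) <;> simp [h]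

lemma Psi_apply (y : Fin n → (Fin n → Fin 2) → ℝ) (e : {c // c ∈ Rset y} → ℝ)
    (sF : {s // s ∈ Fset y}) :
    Psi y e sF = ∑ i, if h : Frac y (i, sF.1) then e ⟨rho y (i, sF.1), rho_mem_R h⟩ else 0 := rfl

noncomputable def phi (y : Fin n → (Fin n → Fin 2) → ℝ) :
    ({s // s ∈ Fset y} → ℝ) →ₗ[ℝ] ℝ where
  toFun := fun f => ∑ sF, par (sF : {s // s ∈ Fset y}).1 * f sF
  map_add' := by
    intro f g
    rw [← Finset.sum_add_distrib]
    exact Finset.sum_congr rfl fun sF _ => by rw [Pi.add_apply]; ring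
  map_smul' := by
    intro a f
    rw [RingHom.id_apply, smul_eq_mul, Finset.mul_sum]
    exact Finset.sum_congr rfl fun sF _ => by rw [Pi.smul_apply, smul_eq_mul]; ring

lemma sum_zero_one_int {ι : Type*} (t : Finset ι) (f : ι → ℝ)
    (h : ∀ j ∈ t, f j = 0 ∨ f j = 1) : ∃ z : ℤ, ∑ j ∈ t, f j = z := by
  classical
  induction t using Finset.induction_on with
  | empty => exact ⟨0, by simp⟩
  | @insert a t ha ih =>
    obtain ⟨z, hz⟩ := ih (fun j hj => h j (Finset.mem_insert_of_mem hj))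
    rcases h a (Finset.mem_insert_self a t) with h0 | h1
    · exact ⟨z, by rw [Finset.sum_insert ha, h0, hz]; ring⟩
    · exact ⟨z + 1, by rw [Finset.sum_insert ha, h1, hz]; push_cast; ring⟩

lemma two_frac (hsum : ∀ s, ∑ i, y i s = 1) (hbd : ∀ i s, 0 ≤ y i s ∧ y i s ≤ 1)
    (s : Fin n → Fin 2) (i : Fin n) (hi : Frac y (i, s)) :
    ∃ j, j ≠ i ∧ Frac y (j, s) := by
  classical
  by_contra hall
  push_neg at hall
  have hz : ∀ j ∈ univ.erase i, y j s = 0 ∨ y j s = 1 := by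
    intro j hj
    have hji : j ≠ i := (Finset.mem_erase.mp hj).1
    have := hall j hji
    unfold Frac at this
    by_contra hcon
    push_neg at hcon
    exact this ⟨hcon.1, hcon.2⟩
  obtain ⟨z, hzsum⟩ := sum_zero_one_int (univ.erase i) (fun j => y j s) hz
  have htot : y i s + ∑ j ∈ univ.erase i, y j s = 1 := by
    have h := Finset.add_sum_erase univ (fun j => y j s) (Finset.mem_univ i)
    rw [hsum s] at h
    exact h
  have hyi : y i s = 1 - (z : ℝ) := by rw [hzsum] at htot; linarith
  have hb := hbd i s
  have h0 : (0:ℝ) < 1 - (z:ℝ) := lt_of_le_of_ne (hyi ▸ hb.1) (fun h => hi.1 (by rw [hyi, ← h]))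
  have h1 : (1:ℝ) - (z:ℝ) < 1 := lt_of_le_of_ne (hyi ▸ hb.2) (fun h => hi.2 (by rw [hyi, h]))
  have hz0 : (0:ℝ) < (z:ℝ) := by linarith
  have hz1 : (z:ℝ) < 1 := by linarith
  have : (0:ℤ) < z := by exact_mod_cast hz0
  have : z < 1 := by exact_mod_cast hz1
  omega


lemma not_inj_Psi (hsum : ∀ s, ∑ i, y i s = 1) (hbd : ∀ i s, 0 ≤ y i s ∧ y i s ≤ 1)
    (i0 : Fin n) (s0 : Fin n → Fin 2) (hfr0 : Frac y (i0, s0)) :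
    ¬ Function.Injective (Psi y) := by
  intro hinj
  -- card R ≤ card F from injectivity
  have hRF : (Rset y).card ≤ (Fset y).card := by
    have h1 := LinearMap.finrank_le_finrank_of_injective hinj
    rwa [Module.finrank_fintype_fun_eq_card, Module.finrank_fintype_fun_eq_card,
      Fintype.card_coe, Fintype.card_coe] at h1
  -- fibers of rho have size ≤ 2
  have hfibsub : ∀ r ∈ Rset y, (FCset y).filter (fun c => rho y c = r) ⊆ {r, pt r} := by
    intro r _ c hc
    rw [Finset.mem_filter] at hc
    rcases rho_eq_or (y := y) c with h | h
    · rw [h] at hc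
      rw [hc.2]
      exact Finset.mem_insert_self _ _
    · rw [h] at hc
      have : c = pt r := by rw [← hc.2, pt_pt]
      rw [this]
      exact Finset.mem_insert_of_mem (Finset.mem_singleton_self _)
  have hfib_le : ∀ r ∈ Rset y, ((FCset y).filter (fun c => rho y c = r)).card ≤ 2 := by
    intro r hr
    calc ((FCset y).filter (fun c => rho y c = r)).card
        ≤ ({r, pt r} : Finset _).card := Finset.card_le_card (hfibsub r hr)
      _ ≤ 2 := le_trans (Finset.card_insert_le _ _) (by simp)
  have hfc_mem : ∀ c, c ∈ FCset y ↔ Frac y c := by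
    intro c; rw [FCset, Finset.mem_filter]; simp
  have hCfib : (FCset y).card = ∑ r ∈ Rset y, ((FCset y).filter (fun c => rho y c = r)).card :=
    Finset.card_eq_sum_card_fiberwise (fun c hc => rho_mem_R ((hfc_mem c).mp hc))
  have hC2R : (FCset y).card ≤ 2 * (Rset y).card := by
    rw [hCfib]
    calc ∑ r ∈ Rset y, ((FCset y).filter (fun c => rho y c = r)).card
        ≤ ∑ _r ∈ Rset y, 2 := Finset.sum_le_sum hfib_le
      _ = 2 * (Rset y).card := by rw [Finset.sum_const, smul_eq_mul, mul_comm]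
  -- profiles: each fractional profile has ≥ 2 fractional coords
  have hCprof : (FCset y).card = ∑ s ∈ Fset y, ((FCset y).filter (fun c => c.2 = s)).card := by
    refine Finset.card_eq_sum_card_fiberwise (fun c hc => ?_)
    rw [Fset, Finset.mem_coe, Finset.mem_filter]
    exact ⟨Finset.mem_univ _, ⟨c.1, by rw [Prod.mk.eta]; exact (hfc_mem c).mp hc⟩⟩
  have h2F : 2 * (Fset y).card ≤ (FCset y).card := by
    rw [hCprof]
    have hge : ∀ s ∈ Fset y, 2 ≤ ((FCset y).filter (fun c => c.2 = s)).card := by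
      intro s hs
      obtain ⟨i, hi⟩ := (Finset.mem_filter.mp hs).2
      obtain ⟨j, hji, hj⟩ := two_frac hsum hbd s i hi
      refine Finset.one_lt_card.mpr ⟨(i, s), ?_, (j, s), ?_, ?_⟩
      · exact Finset.mem_filter.mpr ⟨(hfc_mem _).mpr hi, rfl⟩
      · exact Finset.mem_filter.mpr ⟨(hfc_mem _).mpr hj, rfl⟩
      · simp [Ne.symm hji]
    calc 2 * (Fset y).card = ∑ _s ∈ Fset y, 2 := by rw [Finset.sum_const, smul_eq_mul, mul_comm]
      _ ≤ _ := Finset.sum_le_sum hge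
  have hFR : (Fset y).card = (Rset y).card := by omega
  have hCsum : ∑ r ∈ Rset y, ((FCset y).filter (fun c => rho y c = r)).card
      = ∑ _r ∈ Rset y, 2 := by
    rw [Finset.sum_const, smul_eq_mul, mul_comm]
    omega
  have hfib2 : ∀ r ∈ Rset y, ((FCset y).filter (fun c => rho y c = r)).card = 2 :=
    fun r hr => (Finset.sum_eq_sum_iff_of_le hfib_le).mp hCsum r hr
  have hfibeq : ∀ r ∈ Rset y, (FCset y).filter (fun c => rho y c = r) = {r, pt r} := by
    intro r hr
    refine Finset.eq_of_subset_of_card_le (hfibsub r hr) ?_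
    rw [hfib2 r hr]
    rw [Finset.card_insert_of_notMem (by simp [Ne.symm (pt_ne r)]), Finset.card_singleton]
  have hptr : ∀ r ∈ Rset y, Frac y (pt r) ∧ rho y (pt r) = r := by
    intro r hr
    have : pt r ∈ (FCset y).filter (fun c => rho y c = r) := by
      rw [hfibeq r hr]
      exact Finset.mem_insert_of_mem (Finset.mem_singleton_self _)
    rw [Finset.mem_filter] at this
    exact ⟨(hfc_mem _).mp this.1, this.2⟩
  -- phi kills the range of Psi
  have hker : ∀ e, phi y (Psi y e) = 0 := by
    intro e
    set g : Fin n × (Fin n → Fin 2) → ℝ :=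
      fun c => if h : Frac y c then par c.2 * e ⟨rho y c, rho_mem_R h⟩ else 0 with hg
    have stepA : phi y (Psi y e) = ∑ sF : {s // s ∈ Fset y}, ∑ i, g (i, sF.1) := by
      refine Finset.sum_congr rfl fun sF _ => ?_
      rw [Psi_apply, Finset.mul_sum]
      refine Finset.sum_congr rfl fun i _ => ?_
      by_cases h : Frac y (i, sF.1) <;> simp [hg, h]
    have stepB : ∑ sF : {s // s ∈ Fset y}, ∑ i, g (i, sF.1)
        = ∑ s ∈ Fset y, ∑ i, g (i, s) :=
      Finset.sum_coe_sort (Fset y) (fun s => ∑ i, g (i, s))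
    have stepC : ∑ s ∈ Fset y, ∑ i, g (i, s) = ∑ s : Fin n → Fin 2, ∑ i, g (i, s) := by
      apply Finset.sum_subset (Finset.subset_univ _)
      intro s _ hs
      have hs' : ∀ i, ¬ Frac y (i, s) := by
        intro i hi
        exact hs (Finset.mem_filter.mpr ⟨Finset.mem_univ _, ⟨i, hi⟩⟩)
      exact Finset.sum_eq_zero fun i _ => by simp [hg, hs' i]
    have stepD : ∑ s : Fin n → Fin 2, ∑ i, g (i, s) = ∑ c ∈ FCset y, g c := by
      have hpr : ∑ c : Fin n × (Fin n → Fin 2), g c = ∑ s, ∑ i, g (i, s) :=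
        Fintype.sum_prod_type_right (f := g)
      rw [← hpr]
      symm
      apply Finset.sum_subset (Finset.subset_univ _)
      intro c _ hc
      have : ¬ Frac y c := fun h => hc ((hfc_mem c).mpr h)
      simp [hg, this]
    have stepF : ∑ c ∈ FCset y, g c = 0 := by
      rw [← Finset.sum_fiberwise_of_maps_to (fun c hc => rho_mem_R ((hfc_mem c).mp hc)) g]
      apply Finset.sum_eq_zero
      intro r hr
      rw [hfibeq r hr, Finset.sum_pair (Ne.symm (pt_ne r))]
      have hrR := (Finset.mem_filter.mp hr).2
      have hpt := hptr r hr
      simp only [hg]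
      rw [dif_pos hrR.1, dif_pos hpt.1]
      have e1 : (⟨rho y r, rho_mem_R hrR.1⟩ : {c // c ∈ Rset y})
          = ⟨rho y (pt r), rho_mem_R hpt.1⟩ := Subtype.ext (by show rho y r = rho y (pt r); rw [hrR.2, hpt.2])
      have e2 : e ⟨rho y r, rho_mem_R hrR.1⟩ = e ⟨rho y (pt r), rho_mem_R hpt.1⟩ := congrArg e e1
      rw [e2, par_pt]
      ring
    rw [stepA, stepB, stepC, stepD, stepF]
  -- contradiction via finrank
  have hs0F : s0 ∈ Fset y := Finset.mem_filter.mpr ⟨Finset.mem_univ _, ⟨i0, hfr0⟩⟩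
  have hφne : LinearMap.ker (phi y) ≠ ⊤ := by
    intro htop
    set f0 : {s // s ∈ Fset y} → ℝ := Pi.single (⟨s0, hs0F⟩ : {s // s ∈ Fset y}) (1:ℝ) with hf0
    have h1 : phi y f0 = 0 := by
      have : f0 ∈ LinearMap.ker (phi y) := by
        rw [htop]; exact Submodule.mem_top
      exact LinearMap.mem_ker.mp this
    have h2 : phi y f0 = par s0 := by
      have happ : phi y f0 = ∑ sF : {s // s ∈ Fset y}, par sF.1 * f0 sF := rfl
      rw [happ, Fintype.sum_eq_single (⟨s0, hs0F⟩ : {s // s ∈ Fset y})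
        (fun x hx => by rw [hf0, Pi.single_eq_of_ne hx]; ring)]
      rw [hf0, Pi.single_eq_same]; ring
    exact par_ne_zero s0 (by rw [← h2, h1])
  set Ψ' := (Psi y).codRestrict (LinearMap.ker (phi y))
    (fun e => LinearMap.mem_ker.mpr (hker e)) with hΨ'
  have hinj' : Function.Injective Ψ' := fun a b hab => hinj (congrArg Subtype.val hab)
  have hlt : (Rset y).card < (Fset y).card := by
    have h1 := LinearMap.finrank_le_finrank_of_injective hinj'
    have h2 : Module.finrank ℝ (LinearMap.ker (phi y)) < Module.finrank ℝ ({s // s ∈ Fset y} → ℝ) :=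
      Submodule.finrank_lt hφne
    rw [Module.finrank_fintype_fun_eq_card, Fintype.card_coe] at h1
    rw [Module.finrank_fintype_fun_eq_card, Fintype.card_coe] at h2
    omega
  omega


lemma k2_exists_dir (hsum : ∀ s, ∑ i, y i s = 1) (hbd : ∀ i s, 0 ≤ y i s ∧ y i s ≤ 1)
    (i0 : Fin n) (s0 : Fin n → Fin 2) (hfr0 : Frac y (i0, s0)) :
    ∃ d : Fin n → (Fin n → Fin 2) → ℝ,
      (∃ i s, d i s ≠ 0) ∧
      (∀ i s, ¬ Frac y (i, s) → d i s = 0) ∧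
      (∀ s, ∑ i, d i s = 0) ∧
      (∀ i s, Frac y (i, s) → Frac y (pt (i, s)) →
        d i s = d i (Function.update s i (flip2 (s i)))) := by
  obtain ⟨e1, e2, he, hne⟩ := Function.not_injective_iff.mp (not_inj_Psi hsum hbd i0 s0 hfr0)
  set e := e1 - e2 with hee
  have hΨe : Psi y e = 0 := by rw [hee, map_sub, he, sub_self]
  have he0 : e ≠ 0 := sub_ne_zero.mpr hne
  obtain ⟨r0, her0⟩ : ∃ r, e r ≠ 0 := by
    by_contra h
    push_neg at h
    exact he0 (funext h)
  obtain ⟨⟨ri, rs⟩, hrmem⟩ := r0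
  have hr0R := (Finset.mem_filter.mp hrmem).2
  set d : Fin n → (Fin n → Fin 2) → ℝ :=
    fun i s => if h : Frac y (i, s) then e ⟨rho y (i, s), rho_mem_R h⟩ else 0 with hd
  refine ⟨d, ⟨ri, rs, ?_⟩, ?_, ?_, ?_⟩
  · simp only [hd]
    rw [dif_pos hr0R.1]
    have hsub : (⟨rho y (ri, rs), rho_mem_R hr0R.1⟩ : {c // c ∈ Rset y}) = ⟨(ri, rs), hrmem⟩ :=
      Subtype.ext hr0R.2
    rw [hsub]
    exact her0
  · intro i s h
    simp only [hd]
    rw [dif_neg h]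
  · intro s
    by_cases hsF : s ∈ Fset y
    · have hc := congrFun hΨe ⟨s, hsF⟩
      rw [Pi.zero_apply] at hc
      exact hc
    · apply Finset.sum_eq_zero
      intro i _
      have hnf : ¬ Frac y (i, s) := fun h =>
        hsF (Finset.mem_filter.mpr ⟨Finset.mem_univ _, ⟨i, h⟩⟩)
      simp only [hd]
      rw [dif_neg hnf]
  · intro i s hc hp
    simp only [hd]
    rw [dif_pos hc, dif_pos (show Frac y (i, Function.update s i (flip2 (s i))) from hp)]
    exact congrArg e (Subtype.ext (rho_pair hc hp))

end K2


lemma k2_case {n : ℕ} (v y : Fin n → (Fin n → Fin 2) → ℝ) (hyT : InT v y)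
    (i0 : Fin n) (s0 : Fin n → Fin 2) (h0 : y i0 s0 ≠ 0) (h1 : y i0 s0 ≠ 1) :
    y ∉ Set.extremePoints ℝ {x | InT v x} := by
  classical
  obtain ⟨d, ⟨i1, s1, hd1⟩, hsupp, hsums, hpair⟩ :=
    k2_exists_dir (y := y) hyT.2.1 hyT.1 i0 s0 ⟨h0, h1⟩
  apply not_extreme v y d hyT i1 s1 hd1
  · intro i s hne
    have hf : Frac y (i, s) := by
      by_contra h
      exact hne (hsupp i s h)
    have hb := hyT.1 i s
    exact ⟨lt_of_le_of_ne hb.1 (Ne.symm hf.1), lt_of_le_of_ne hb.2 hf.2⟩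
  · exact hsums
  · intro i s a b hv hyy
    by_cases hab : a = b
    · rw [hab]
    · have hai : (Function.update s i a) i = a := Function.update_self i a s
      have hfl : flip2 ((Function.update s i a) i) = b := by
        rw [hai]
        exact flip2_of_ne a b hab
      have hupd : Function.update (Function.update s i a) i
          (flip2 ((Function.update s i a) i)) = Function.update s i b := by
        rw [hfl, Function.update_idem]
      by_cases hf : Frac y (i, Function.update s i a)
      · have hfp : Frac y (pt (i, Function.update s i a)) := by
          show Frac y (i, Function.update (Function.update s i a) i
            (flip2 ((Function.update s i a) i)))
          rw [hupd]
          exact ⟨by rw [← hyy]; exact hf.1, by rw [← hyy]; exact hf.2⟩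
        have hpe := hpair i (Function.update s i a) hf hfp
        rw [hupd] at hpe
        rw [hpe]
      · have hfb : ¬ Frac y (i, Function.update s i b) := by
          intro hb
          exact hf ⟨by rw [hyy]; exact hb.1, by rw [hyy]; exact hb.2⟩
        rw [hsupp _ _ hf, hsupp _ _ hfb]

/-- if `n = 2` or `k = 2`, every extreme point of the truthful polytope
induced by any family of value functions is integral. -/
theorem stmt7 (n k : ℕ) (hnk : n = 2 ∨ k = 2)
    (v : Fin n → (Fin n → Fin k) → ℝ) (hv : ∀ i s, 0 < v i s) :
    ∀ y ∈ Set.extremePoints ℝ {x : Fin n → (Fin n → Fin k) → ℝ | InT v x},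
      ∀ i s, y i s = 0 ∨ y i s = 1 := by
  intro y hy i s
  by_contra hc
  push_neg at hc
  have hyT : InT v y := hy.1
  rcases hnk with rfl | rfl
  · exact n2_case v y hyT i s hc.1 hc.2 hy
  · exact k2_case v y hyT i s hc.1 hc.2 hy

end Stmt7
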